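/- Let v_i be a vertex of G_i, let P be a k-plex with v_i ∈ P and |P| ≥ q, and let u ∈ P be a vertex at distance exactly 2 from v_i in G_i (so (u, v_i) ∉ E_i). Then |N_{G_i}(u) ∩ N_{G_i}(v_i)| ≥ q - 2k + 2. -/

import Mathlib

open Finset

variable {V : Type*} [Fintype V] [DecidableEq V]

/-- A set `P` of vertices is a `k`-plex in `G` if every `u ∈ P` has degree at least
`|P| - k` in the induced subgraph `G[P]`, i.e. `|P| ≤ d_P(u) + k`. -/
def SimpleGraph.IsKPlex (G : SimpleGraph V) [DecidableRel G.Adj] (k : ℕ) (P : Finset V) : Prop :=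
  ∀ u ∈ P, P.card ≤ (P.filter (fun x => G.Adj u x)).card + k

theorem seed_common_neighbors_dist_two (G : SimpleGraph V) [DecidableRel G.Adj]
    (k q : ℕ) (hk : 1 ≤ k) (v_i : V) (P : Finset V) (hP : G.IsKPlex k P)
    (hvi : v_i ∈ P) (hq : q ≤ P.card) (u : V) (hu : u ∈ P)
    (hdist : G.dist u v_i = 2) :
    (q : ℤ) - 2 * (k : ℤ) + 2 ≤
      ((G.neighborFinset u ∩ G.neighborFinset v_i).card : ℤ) := by
  classical
  have hne : u ≠ v_i := by
    intro h; rw [h, SimpleGraph.dist_self] at hdist; omega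
  have hadj : ¬ G.Adj u v_i := by
    intro h
    have := (SimpleGraph.dist_eq_one_iff_adj).mpr h
    omega
  set A := P.filter (fun x => G.Adj u x) with hAdef
  set B := P.filter (fun x => G.Adj v_i x) with hBdef
  have hA : P.card ≤ A.card + k := hP u hu
  have hB : P.card ≤ B.card + k := hP v_i hvi
  -- A ∪ B avoids u and v_i
  have huAB : u ∉ A ∪ B := by
    simp only [mem_union, hAdef, hBdef, mem_filter]
    rintro (⟨_, h⟩ | ⟨_, h⟩)
    · exact G.loopless.irrefl u h
    · exact hadj (h.symm)
  have hvAB : v_i ∉ A ∪ B := by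
    simp only [mem_union, hAdef, hBdef, mem_filter]
    rintro (⟨_, h⟩ | ⟨_, h⟩)
    · exact hadj h
    · exact G.loopless.irrefl v_i h
  have hsub : (A ∪ B) ∪ {u, v_i} ⊆ P := by
    intro x hx
    simp only [mem_union, mem_insert, mem_singleton, hAdef, hBdef, mem_filter] at hx
    rcases hx with ((⟨h, _⟩ | ⟨h, _⟩) | h | h) <;> simp_all
  have hcardpair : ({u, v_i} : Finset V).card = 2 := card_pair hne
  have hdisj : Disjoint (A ∪ B) ({u, v_i} : Finset V) := by
    rw [disjoint_right]
    intro x hx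
    simp only [mem_insert, mem_singleton] at hx
    rcases hx with rfl | rfl
    · exact huAB
    · exact hvAB
  have hcard : (A ∪ B).card + 2 ≤ P.card := by
    have := card_le_card hsub
    rwa [card_union_of_disjoint hdisj, hcardpair] at this
  have hinter : A ∩ B ⊆ G.neighborFinset u ∩ G.neighborFinset v_i := by
    intro x hx
    simp only [mem_inter, hAdef, hBdef, mem_filter, SimpleGraph.mem_neighborFinset] at hx ⊢
    exact ⟨hx.1.2, hx.2.2⟩
  have hle : (A ∩ B).card ≤ (G.neighborFinset u ∩ G.neighborFinset v_i).card :=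
    card_le_card hinter
  have hiu : (A ∩ B).card + (A ∪ B).card = A.card + B.card :=
    card_inter_add_card_union A B
  have := hq
  push_cast
  omega
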